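/- Suppose Assumptions 2.1 and 3.1 hold and that Ψ^ℓ = P_ℓ ∘ Ψ. Then for every n ≥ 1 there is a constant c (depending on n but not on ℓ) such that ‖(I − P_ℓ) C̄_n‖_{𝓗⊗𝓗} ≤ c · h_ℓ^{β/2} for all ℓ ≥ 0, where C̄_n = Cov[v̄_n] is the MFEnKF prediction covariance. -/

import Mathlib

open MeasureTheory ProbabilityTheory ContinuousLinearMap
open scoped RealInnerProductSpace ENNReal

/-- The `L^p(Ω;𝓗)`-norm of a random variable, for a real exponent `p`. -/
noncomputable def lpNorm {Ω : Type*} [MeasurableSpace Ω] (μ : Measure Ω)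
    {H : Type*} [NormedAddCommGroup H] (p : ℝ) (u : Ω → H) : ℝ :=
  (∫ ω, ‖u ω‖ ^ p ∂μ) ^ (1 / p)

/-- Hilbert–Schmidt norm of an operator on `𝓗`, computed in the orthonormal basis `e`. -/
noncomputable def hsNorm {H : Type*} [NormedAddCommGroup H] [InnerProductSpace ℝ H]
    (e : HilbertBasis ℕ ℝ H) (T : H →L[ℝ] H) : ℝ :=
  Real.sqrt (∑' k, ‖T (e k)‖ ^ 2)

/-- Auxiliary: the square of the norm of an `L²` function is integrable. -/
lemma aux_sq_int {Ω : Type*} [MeasurableSpace Ω] {μ : Measure Ω}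
    {H : Type*} [NormedAddCommGroup H] {f : Ω → H} (hf : MemLp f 2 μ) :
    Integrable (fun ω => ‖f ω‖ ^ 2) μ := by
  have h := hf.integrable_norm_rpow two_ne_zero ENNReal.ofNat_ne_top
  have h2 : ∀ x : ℝ, x ^ ((2 : ℝ≥0∞).toReal) = x ^ (2 : ℕ) := by
    intro x
    rw [ENNReal.toReal_ofNat, show (2 : ℝ) = ((2 : ℕ) : ℝ) by norm_num, Real.rpow_natCast]
  simpa only [h2] using h

/-- Auxiliary: the second moment of a centered `L²` random variable is bounded by
the second moment of the variable itself. -/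
lemma aux_centered_le {Ω : Type*} [MeasurableSpace Ω] {μ : Measure Ω} [IsProbabilityMeasure μ]
    {H : Type*} [NormedAddCommGroup H] [InnerProductSpace ℝ H] [CompleteSpace H]
    {f : Ω → H} (hf : MemLp f 2 μ) :
    ∫ ω, ‖f ω - ∫ x, f x ∂μ‖ ^ 2 ∂μ ≤ ∫ ω, ‖f ω‖ ^ 2 ∂μ := by
  set m := ∫ x, f x ∂μ with hm
  have hfi : Integrable f μ := hf.integrable one_le_two
  have hf2 : Integrable (fun ω => ‖f ω‖ ^ 2) μ := aux_sq_int hf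
  have hin : Integrable (fun ω => ⟪m, f ω⟫) μ := hfi.const_inner m
  have hexp : (fun ω => ‖f ω - m‖ ^ 2)
      = fun ω => ‖f ω‖ ^ 2 - 2 * ⟪m, f ω⟫ + ‖m‖ ^ 2 := by
    funext ω
    rw [norm_sub_sq_real, real_inner_comm]
  have hin2 : Integrable (fun ω => 2 * ⟪m, f ω⟫) μ := hin.const_mul 2
  have hsub : Integrable (fun ω => ‖f ω‖ ^ 2 - 2 * ⟪m, f ω⟫) μ := hf2.sub hin2
  have e1 : ∫ ω, (‖f ω‖ ^ 2 - 2 * ⟪m, f ω⟫ + ‖m‖ ^ 2) ∂μ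
      = (∫ ω, (‖f ω‖ ^ 2 - 2 * ⟪m, f ω⟫) ∂μ) + ‖m‖ ^ 2 := by
    rw [integral_add hsub (integrable_const _), integral_const, probReal_univ, one_smul]
  have e2 : ∫ ω, (‖f ω‖ ^ 2 - 2 * ⟪m, f ω⟫) ∂μ
      = (∫ ω, ‖f ω‖ ^ 2 ∂μ) - 2 * ∫ ω, ⟪m, f ω⟫ ∂μ := by
    rw [integral_sub hf2 hin2, integral_const_mul]
  have e3 : ∫ ω, ⟪m, f ω⟫ ∂μ = ‖m‖ ^ 2 := by
    rw [integral_inner hfi m, ← hm, real_inner_self_eq_norm_sq]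
  rw [hexp, e1, e2, e3]
  nlinarith [sq_nonneg ‖m‖]

set_option maxHeartbeats 1000000 in
/-- under Assumptions 2.1 and 3.1 with `Ψ^ℓ = P_ℓ ∘ Ψ`, for every `n ≥ 1`
there is a constant `c` (depending on `n` but not on `ℓ`) with
`‖(I − P_ℓ) C̄_n‖_{𝓗⊗𝓗} ≤ c h_ℓ^{β/2}` for all `ℓ`, where `C̄_n` is the MFEnKF
prediction covariance. -/
theorem stmt4
    {Ω : Type*} [MeasurableSpace Ω] (μ : Measure Ω) [IsProbabilityMeasure μ]
    {H : Type*} [NormedAddCommGroup H] [InnerProductSpace ℝ H] [CompleteSpace H]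
    (e : HilbertBasis ℕ ℝ H)
    -- hierarchy: `N_ℓ ≂ κ^ℓ`, `h_ℓ ≂ N_ℓ^{−1/d}`, `P_ℓ` projection on first `N_ℓ` modes
    (κ : ℝ) (hκ : 1 < κ) (d : ℕ) (hd : 1 ≤ d)
    (N : ℕ → ℕ) (h : ℕ → ℝ)
    (cN₁ cN₂ ch₁ ch₂ : ℝ) (hcN₁ : 0 < cN₁) (hch₁ : 0 < ch₁)
    (hN : ∀ ℓ : ℕ, cN₁ * κ ^ ℓ ≤ (N ℓ : ℝ) ∧ (N ℓ : ℝ) ≤ cN₂ * κ ^ ℓ)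
    (hh : ∀ ℓ : ℕ, ch₁ * (N ℓ : ℝ) ^ (-(1 : ℝ) / d) ≤ h ℓ ∧
      h ℓ ≤ ch₂ * (N ℓ : ℝ) ^ (-(1 : ℝ) / d))
    (P : ℕ → H →L[ℝ] H)
    (hP : ∀ ℓ k, P ℓ (e k) = if k < N ℓ then (e k : H) else 0)
    -- rates
    (β γ : ℝ) (hβ : 0 < β) (hγ : 0 < γ)
    -- observation model
    {m : ℕ}
    (Hop : H →L[ℝ] EuclideanSpace ℝ (Fin m))
    (Γ : EuclideanSpace ℝ (Fin m) →L[ℝ] EuclideanSpace ℝ (Fin m))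
    (hΓsa : IsSelfAdjoint Γ)
    (hΓpd : ∀ x : EuclideanSpace ℝ (Fin m), x ≠ 0 → 0 < ⟪x, Γ x⟫)
    -- Assumption 2.1 on `Ψ` and the solvers `Ψ^ℓ = P_ℓ ∘ Ψ`
    (Ψ : (Ω → H) → Ω → H) (Ψl : ℕ → (Ω → H) → Ω → H) (cΨ : ℝ)
    (hΨl : ∀ ℓ u ω, Ψl ℓ u ω = P ℓ (Ψ u ω))
    (hlip : ∀ p : ℝ, 2 ≤ p → ∀ u v : Ω → H,
      lpNorm μ p (fun ω => Ψ u ω - Ψ v ω) ≤ cΨ * lpNorm μ p (fun ω => u ω - v ω))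
    (hbd : ∀ p : ℝ, 2 ≤ p → ∀ u : Ω → H,
      lpNorm μ p (Ψ u) ^ p ≤ cΨ * (1 + lpNorm μ p u ^ p))
    (hmem : ∀ p : ℝ, 2 ≤ p → ∀ u : Ω → H, MemLp u (ENNReal.ofReal p) μ →
      MemLp (Ψ u) (ENNReal.ofReal p) μ)
    (hlipl : ∀ p : ℝ, 2 ≤ p → ∀ ℓ, ∀ u v : Ω → H,
      lpNorm μ p (fun ω => Ψl ℓ u ω - Ψl ℓ v ω) ≤ cΨ * lpNorm μ p (fun ω => u ω - v ω))
    (hbdl : ∀ p : ℝ, 2 ≤ p → ∀ ℓ, ∀ u : Ω → H,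
      lpNorm μ p (Ψl ℓ u) ^ p ≤ cΨ * (1 + lpNorm μ p u ^ p))
    -- Assumption 3.1
    (cA : ℝ)
    (hA1 : ∀ p : ℝ, 2 ≤ p → ∀ ℓ, ∀ u : Ω → H,
      lpNorm μ p (fun ω => Ψl ℓ u ω - Ψ u ω) ≤ cA * h ℓ ^ (β / 2))
    -- observations and perturbation noise
    (y : ℕ → EuclideanSpace ℝ (Fin m))
    (η : ℕ → Ω → EuclideanSpace ℝ (Fin m))
    (hη : ∀ n, ∀ p : ℝ, 2 ≤ p → MemLp (η n) (ENNReal.ofReal p) μ)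
    -- the MFEnKF process
    (vbar vhat : ℕ → Ω → H)
    (mbar : ℕ → H)
    (Cbar : ℕ → H →L[ℝ] H)
    (Kbar : ℕ → EuclideanSpace ℝ (Fin m) →L[ℝ] H)
    (h0 : ∀ p : ℝ, 2 ≤ p → MemLp (vhat 0) (ENNReal.ofReal p) μ)
    (hA2 : ∀ p : ℝ, 2 ≤ p → ∀ ℓ,
      lpNorm μ p (fun ω => vhat 0 ω - P ℓ (vhat 0 ω)) ≤ cA * h ℓ ^ (β / 2))
    (hpred : ∀ n, vbar (n + 1) = Ψ (vhat n))
    (hmean : ∀ n, mbar (n + 1) = ∫ ω, vbar (n + 1) ω ∂μ)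
    (hcov : ∀ n, ∀ w : H, Cbar (n + 1) w =
      ∫ ω, ⟪vbar (n + 1) ω - mbar (n + 1), w⟫ • (vbar (n + 1) ω - mbar (n + 1)) ∂μ)
    (hgain : ∀ n, Kbar (n + 1) ∘L
        (Hop ∘L Cbar (n + 1) ∘L (ContinuousLinearMap.adjoint Hop) + Γ)
      = Cbar (n + 1) ∘L (ContinuousLinearMap.adjoint Hop))
    (hupd : ∀ n ω, vhat (n + 1) ω =
      vbar (n + 1) ω - Kbar (n + 1) (Hop (vbar (n + 1) ω))
        + Kbar (n + 1) (y (n + 1) + η (n + 1) ω)) :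
    ∀ n : ℕ, 1 ≤ n → ∃ c : ℝ, 0 < c ∧ ∀ ℓ : ℕ,
      hsNorm e ((ContinuousLinearMap.id ℝ H - P ℓ) ∘L Cbar n) ≤ c * h ℓ ^ (β / 2) := by
  -- positivity of the mesh sizes
  have hhpos : ∀ ℓ : ℕ, 0 < h ℓ := by
    intro ℓ
    have hNpos : (0 : ℝ) < (N ℓ : ℝ) :=
      lt_of_lt_of_le (by positivity) (hN ℓ).1
    have := (hh ℓ).1
    have h1 : (0 : ℝ) < ch₁ * (N ℓ : ℝ) ^ (-(1 : ℝ) / d) := by positivity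
    linarith
  have hbpos : ∀ ℓ : ℕ, 0 < h ℓ ^ (β / 2) := fun ℓ => Real.rpow_pos_of_pos (hhpos ℓ) _
  -- lpNorm is always nonnegative
  have hlp_nonneg : ∀ (p : ℝ) (g : Ω → H), 0 ≤ lpNorm μ p g := by
    intro p g
    unfold _root_.lpNorm
    apply Real.rpow_nonneg
    apply integral_nonneg
    intro ω
    positivity
  -- hence `cA ≥ 0`
  have hcA : 0 ≤ cA := by
    have h1 := hA1 2 le_rfl 0 (vhat 0)
    have h2 := hlp_nonneg 2 (fun ω => Ψl 0 (vhat 0) ω - Ψ (vhat 0) ω)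
    have h3 := hbpos 0
    nlinarith
  -- membership of the filter states in L²
  have hof2 : (ENNReal.ofReal 2 : ℝ≥0∞) = 2 := by
    simp [ENNReal.ofReal_ofNat]
  have hvhat2 : ∀ j : ℕ, MemLp (vhat j) 2 μ := by
    intro j
    induction j with
    | zero => rw [← hof2]; exact h0 2 le_rfl
    | succ j ih =>
      have ih' : MemLp (vhat j) (ENNReal.ofReal 2) μ := by rw [hof2]; exact ih
      have hvb : MemLp (vbar (j + 1)) (ENNReal.ofReal 2) μ := by
        rw [hpred j]
        exact hmem 2 le_rfl _ ih'
      have h1 : MemLp (fun ω => Kbar (j + 1) (Hop (vbar (j + 1) ω))) (ENNReal.ofReal 2) μ :=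
        ((Kbar (j + 1)).comp Hop).comp_memLp' hvb
      have h2 : MemLp (fun ω => Kbar (j + 1) (y (j + 1) + η (j + 1) ω)) (ENNReal.ofReal 2) μ := by
        have hs : MemLp (fun ω => y (j + 1) + η (j + 1) ω) (ENNReal.ofReal 2) μ :=
          (memLp_const (y (j + 1))).add (hη (j + 1) 2 le_rfl)
        exact (Kbar (j + 1)).comp_memLp' hs
      have h3 := (hvb.sub h1).add h2
      rw [← hof2]
      have he : vhat (j + 1) = fun ω =>
          vbar (j + 1) ω - Kbar (j + 1) (Hop (vbar (j + 1) ω))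
            + Kbar (j + 1) (y (j + 1) + η (j + 1) ω) := funext (hupd j)
      rw [he]
      exact h3
  -- main argument
  intro n hn
  obtain ⟨k, rfl⟩ : ∃ k, n = k + 1 := ⟨n - 1, (Nat.succ_pred_eq_of_pos hn).symm⟩
  set u : Ω → H := vbar (k + 1) with hu_def
  have hu_pred : u = Ψ (vhat k) := hpred k
  have hu2 : MemLp u 2 μ := by
    rw [hu_pred, ← hof2]
    exact hmem 2 le_rfl _ (by rw [hof2]; exact hvhat2 k)
  have hui : Integrable u μ := hu2.integrable one_le_two
  set mm : H := mbar (k + 1) with hmm_def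
  have hmean' : mm = ∫ ω, u ω ∂μ := hmean k
  set X : Ω → H := fun ω => u ω - mm with hX_def
  have hX2 : MemLp X 2 μ := hu2.sub (memLp_const mm)
  have hXsq : Integrable (fun ω => ‖X ω‖ ^ 2) μ := aux_sq_int hX2
  -- the candidate constant
  set A : ℝ := Real.sqrt (∫ ω, ‖u ω‖ ^ 2 ∂μ) with hA_def
  have hA_nonneg : 0 ≤ A := Real.sqrt_nonneg _
  refine ⟨A * cA + 1, by positivity, ?_⟩
  intro ℓ
  set Q : H →L[ℝ] H := ContinuousLinearMap.id ℝ H - P ℓ with hQ_def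
  set T : H →L[ℝ] H := Q ∘L Cbar (k + 1) with hT_def
  -- integrability of the covariance integrand
  have hint : ∀ w : H, Integrable (fun ω => ⟪X ω, w⟫ • X ω) μ := by
    intro w
    have hmeas : AEStronglyMeasurable (fun ω => ⟪X ω, w⟫ • X ω) μ :=
      (hX2.1.inner aestronglyMeasurable_const).smul hX2.1
    refine Integrable.mono' (hXsq.const_mul ‖w‖) hmeas ?_
    filter_upwards with ω
    rw [norm_smul]
    have h1 : ‖⟪X ω, w⟫‖ ≤ ‖X ω‖ * ‖w‖ := norm_inner_le_norm _ _
    have h2 : ‖X ω‖ ≥ 0 := norm_nonneg _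
    nlinarith [norm_nonneg (X ω), norm_nonneg w]
  -- the operator applied to basis vectors
  have hTw : ∀ w : H, T w = ∫ ω, ⟪X ω, w⟫ • Q (X ω) ∂μ := by
    intro w
    have : T w = Q (Cbar (k + 1) w) := rfl
    rw [this, hcov k w]
    have hXrw : (fun ω => ⟪vbar (k + 1) ω - mbar (k + 1), w⟫ •
        (vbar (k + 1) ω - mbar (k + 1))) = fun ω => ⟪X ω, w⟫ • X ω := rfl
    rw [hXrw, ← Q.integral_comp_comm (hint w)]
    congr 1
    funext ω
    exact _root_.map_smul Q _ _
  -- the coefficient sequence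
  set a : ℕ → ℝ := fun kk => ∫ ω, ⟪X ω, e kk⟫ ^ 2 ∂μ with ha_def
  set B : ℝ := ∫ ω, ‖Q (X ω)‖ ^ 2 ∂μ with hB_def
  have hQX2 : MemLp (fun ω => Q (X ω)) 2 μ := Q.comp_memLp' hX2
  have hQXsq : Integrable (fun ω => ‖Q (X ω)‖ ^ 2) μ := aux_sq_int hQX2
  have hB_nonneg : 0 ≤ B := integral_nonneg fun ω => by positivity
  have ha_nonneg : ∀ kk, 0 ≤ a kk := fun kk => integral_nonneg fun ω => by positivity
  have ha_int : ∀ kk, Integrable (fun ω => ⟪X ω, e kk⟫ ^ 2) μ := by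
    intro kk
    have hm1 : AEStronglyMeasurable (fun ω => ⟪X ω, e kk⟫) μ :=
      hX2.1.inner aestronglyMeasurable_const
    refine Integrable.mono' hXsq (by simpa [sq, Pi.mul_def] using hm1.mul hm1) ?_
    filter_upwards with ω
    have h1 : |⟪X ω, e kk⟫| ≤ ‖X ω‖ * ‖(e kk : H)‖ := abs_real_inner_le_norm _ _
    have h2 : ‖(e kk : H)‖ = 1 := e.orthonormal.1 kk
    rw [h2, mul_one] at h1
    have h3 : ‖⟪X ω, e kk⟫ ^ 2‖ = ⟪X ω, e kk⟫ ^ 2 := by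
      rw [Real.norm_eq_abs, abs_of_nonneg (sq_nonneg _)]
    rw [h3]
    nlinarith [sq_abs ⟪X ω, e kk⟫, abs_nonneg ⟪X ω, e kk⟫, norm_nonneg (X ω)]
  -- Bessel bound on the partial sums of `a`
  have ha_partial : ∀ nn : ℕ, ∑ kk ∈ Finset.range nn, a kk ≤ ∫ ω, ‖X ω‖ ^ 2 ∂μ := by
    intro nn
    rw [← integral_finset_sum _ fun kk _ => ha_int kk]
    refine integral_mono (integrable_finset_sum _ fun kk _ => ha_int kk) hXsq ?_
    intro ω
    have hb := e.orthonormal.sum_inner_products_le (s := Finset.range nn) (X ω)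
    simpa [sq_abs, real_inner_comm] using hb
  have ha_sum : Summable a :=
    summable_of_sum_range_le ha_nonneg ha_partial
  have ha_tsum : ∑' kk, a kk ≤ ∫ ω, ‖X ω‖ ^ 2 ∂μ :=
    Summable.tsum_le_of_sum_range_le ha_sum ha_partial
  -- Cauchy–Schwarz bound for each basis vector
  have hkey : ∀ kk : ℕ, ‖T (e kk)‖ ^ 2 ≤ a kk * B := by
    intro kk
    have h1 : ‖T (e kk)‖ ≤ ∫ ω, ‖⟪X ω, e kk⟫‖ * ‖Q (X ω)‖ ∂μ := by
      rw [hTw (e kk)]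
      refine le_trans (norm_integral_le_integral_norm _) (le_of_eq ?_)
      congr 1
      funext ω
      rw [norm_smul]
    have conj : Real.HolderConjugate 2 2 := Real.HolderConjugate.two_two
    have hfk : MemLp (fun ω => ‖⟪X ω, e kk⟫‖) (ENNReal.ofReal 2) μ := by
      rw [hof2]
      exact (hX2.inner_const (e kk : H)).norm
    have hgk : MemLp (fun ω => ‖Q (X ω)‖) (ENNReal.ofReal 2) μ := by
      rw [hof2]; exact hQX2.norm
    have hCS := integral_mul_le_Lp_mul_Lq_of_nonneg conj
      (Filter.Eventually.of_forall fun ω => norm_nonneg _)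
      (Filter.Eventually.of_forall fun ω => norm_nonneg _) hfk hgk
    have hpow2 : ∀ x : ℝ, 0 ≤ x → x ^ (2 : ℝ) = x ^ (2 : ℕ) := by
      intro x hx
      rw [show (2 : ℝ) = ((2 : ℕ) : ℝ) by norm_num, Real.rpow_natCast]
    have hfeq : ∫ ω, ‖⟪X ω, e kk⟫‖ ^ (2 : ℝ) ∂μ = a kk := by
      show _ = ∫ ω, ⟪X ω, e kk⟫ ^ 2 ∂μ
      congr 1
      funext ω
      rw [hpow2 _ (norm_nonneg _), Real.norm_eq_abs, sq_abs]
    have hgeq : ∫ ω, ‖Q (X ω)‖ ^ (2 : ℝ) ∂μ = B := by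
      show _ = ∫ ω, ‖Q (X ω)‖ ^ 2 ∂μ
      congr 1
      funext ω
      rw [hpow2 _ (norm_nonneg _)]
    rw [hfeq, hgeq] at hCS
    have h2 : ‖T (e kk)‖ ≤ a kk ^ ((1 : ℝ) / 2) * B ^ ((1 : ℝ) / 2) := le_trans h1 hCS
    have h3 : ‖T (e kk)‖ ^ 2 ≤ (a kk ^ ((1 : ℝ) / 2) * B ^ ((1 : ℝ) / 2)) ^ 2 :=
      pow_le_pow_left₀ (norm_nonneg _) h2 2
    refine le_trans h3 (le_of_eq ?_)
    rw [mul_pow, ← Real.rpow_natCast (a kk ^ ((1 : ℝ) / 2)) 2,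
      ← Real.rpow_natCast (B ^ ((1 : ℝ) / 2)) 2,
      ← Real.rpow_mul (ha_nonneg kk), ← Real.rpow_mul hB_nonneg]
    norm_num
  -- summability and the HS-norm bound
  have hT_sum : Summable (fun kk => ‖T (e kk)‖ ^ 2) :=
    Summable.of_nonneg_of_le (fun kk => by positivity) hkey (ha_sum.mul_right B)
  have hT_tsum : ∑' kk, ‖T (e kk)‖ ^ 2 ≤ (∫ ω, ‖X ω‖ ^ 2 ∂μ) * B := by
    calc ∑' kk, ‖T (e kk)‖ ^ 2 ≤ ∑' kk, a kk * B :=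
          Summable.tsum_le_tsum hkey hT_sum (ha_sum.mul_right B)
      _ = (∑' kk, a kk) * B := tsum_mul_right
      _ ≤ (∫ ω, ‖X ω‖ ^ 2 ∂μ) * B := mul_le_mul_of_nonneg_right ha_tsum hB_nonneg
  -- second-moment bounds
  have hXm : ∫ ω, ‖X ω‖ ^ 2 ∂μ ≤ ∫ ω, ‖u ω‖ ^ 2 ∂μ := by
    have h1 := aux_centered_le hu2
    have h2 : ∫ ω, ‖X ω‖ ^ 2 ∂μ = ∫ ω, ‖u ω - ∫ x, u x ∂μ‖ ^ 2 ∂μ := by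
      congr 1
      funext ω
      show ‖u ω - mm‖ ^ 2 = _
      rw [hmean']
    rw [h2]
    exact h1
  have hQm : Q mm = ∫ ω, Q (u ω) ∂μ := by
    rw [hmean']
    exact (Q.integral_comp_comm hui).symm
  have hQu2 : MemLp (fun ω => Q (u ω)) 2 μ := Q.comp_memLp' hu2
  have hBle : B ≤ ∫ ω, ‖Q (u ω)‖ ^ 2 ∂μ := by
    have h1 := aux_centered_le hQu2
    have h2 : (fun ω => ‖Q (X ω)‖ ^ 2)
        = fun ω => ‖Q (u ω) - ∫ x, Q (u x) ∂μ‖ ^ 2 := by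
      funext ω
      rw [hX_def]
      simp only [map_sub]
      rw [← hQm]
    rw [hB_def, h2]
    exact h1
  -- identification with the multilevel error
  have hQu_eq : ∫ ω, ‖Q (u ω)‖ ^ 2 ∂μ
      = ∫ ω, ‖Ψl ℓ (vhat k) ω - Ψ (vhat k) ω‖ ^ 2 ∂μ := by
    congr 1
    funext ω
    have : Q (u ω) = Ψ (vhat k) ω - P ℓ (Ψ (vhat k) ω) := by
      rw [hQ_def]
      simp [hu_pred]
    rw [this, hΨl, ← norm_neg]
    congr 1
    abel
  have hlp_eq : Real.sqrt (∫ ω, ‖Ψl ℓ (vhat k) ω - Ψ (vhat k) ω‖ ^ 2 ∂μ)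
      = lpNorm μ 2 (fun ω => Ψl ℓ (vhat k) ω - Ψ (vhat k) ω) := by
    have hbase : (∫ ω, ‖Ψl ℓ (vhat k) ω - Ψ (vhat k) ω‖ ^ 2 ∂μ)
        = ∫ ω, ‖Ψl ℓ (vhat k) ω - Ψ (vhat k) ω‖ ^ (2 : ℝ) ∂μ := by
      congr 1
      funext ω
      rw [show (2 : ℝ) = ((2 : ℕ) : ℝ) by norm_num, Real.rpow_natCast]
    unfold _root_.lpNorm
    rw [Real.sqrt_eq_rpow, hbase]
  have hsqrtB : Real.sqrt B ≤ cA * h ℓ ^ (β / 2) := by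
    have h1 : Real.sqrt B ≤ Real.sqrt (∫ ω, ‖Ψl ℓ (vhat k) ω - Ψ (vhat k) ω‖ ^ 2 ∂μ) := by
      apply Real.sqrt_le_sqrt
      rw [← hQu_eq]
      exact hBle
    calc Real.sqrt B ≤ _ := h1
      _ = lpNorm μ 2 (fun ω => Ψl ℓ (vhat k) ω - Ψ (vhat k) ω) := hlp_eq
      _ ≤ cA * h ℓ ^ (β / 2) := hA1 2 le_rfl ℓ (vhat k)
  -- conclusion
  have hfinal : hsNorm e T ≤ A * Real.sqrt B := by
    unfold hsNorm
    calc Real.sqrt (∑' kk, ‖T (e kk)‖ ^ 2)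
        ≤ Real.sqrt ((∫ ω, ‖X ω‖ ^ 2 ∂μ) * B) := Real.sqrt_le_sqrt hT_tsum
      _ = Real.sqrt (∫ ω, ‖X ω‖ ^ 2 ∂μ) * Real.sqrt B := Real.sqrt_mul
          (integral_nonneg fun ω => by positivity) B
      _ ≤ A * Real.sqrt B := by
          apply mul_le_mul_of_nonneg_right _ (Real.sqrt_nonneg B)
          exact Real.sqrt_le_sqrt hXm
  calc hsNorm e T ≤ A * Real.sqrt B := hfinal
    _ ≤ A * (cA * h ℓ ^ (β / 2)) := mul_le_mul_of_nonneg_left hsqrtB hA_nonneg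
    _ = A * cA * h ℓ ^ (β / 2) := by ring
    _ ≤ (A * cA + 1) * h ℓ ^ (β / 2) := by
        have := hbpos ℓ
        nlinarith
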